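/- Let q, j be integers with 1 ≤ j ≤ q, where j is odd and q is even, let δ > 0 be real, and let r₊ > 0 be the unique positive real root of P. Then there exists a real number r₋ < −r₊ with Q(r₋) = 0, and moreover every complex root z of Q satisfies |z| ≤ −r₋ = |r₋|. In particular, the root of Q (and of P) of largest modulus is real and negative. -/

import Mathlib

/-- for `j` odd, `q` even and `δ > 0`, `Q` has a real root
`r₋ < −r₊`, and every complex root `z` of `Q` satisfies `|z| ≤ −r₋`; in
particular the root of largest modulus is real and negative. Here `r₊` is the
unique positive real root of `P(λ) = Σ_{k=j}^{q} λ^k − δ·Σ_{k=0}^{j−1} λ^k`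
and `Q(λ) = λ^{q+1} − (1+δ)·λ^j + δ`. -/
theorem stmt_6 (q j : ℕ) (hj : 1 ≤ j) (hjq : j ≤ q) (hjodd : Odd j) (hqeven : Even q)
    (δ : ℝ) (hδ : 0 < δ) (rp : ℝ) (hrp : 0 < rp)
    (hroot : (∑ k ∈ Finset.Icc j q, rp ^ k) - δ * ∑ k ∈ Finset.range j, rp ^ k = 0)
    (huniq : ∀ y : ℝ, 0 < y →
      (∑ k ∈ Finset.Icc j q, y ^ k) - δ * ∑ k ∈ Finset.range j, y ^ k = 0 → y = rp) :
    ∃ rm : ℝ, rm < -rp ∧ rm ^ (q + 1) - (1 + δ) * rm ^ j + δ = 0 ∧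
      ∀ z : ℂ, z ^ (q + 1) - ((1 : ℂ) + δ) * z ^ j + δ = 0 → ‖z‖ ≤ -rm := by
  -- Step 1: Q(rp) = 0 since Q = (λ-1)P and P(rp) = 0.
  have hsum : (∑ k ∈ Finset.Icc j q, rp ^ k)
      = (∑ k ∈ Finset.range (q+1), rp ^ k) - ∑ k ∈ Finset.range j, rp ^ k := by
    rw [← Finset.Ico_add_one_right_eq_Icc, Finset.sum_Ico_eq_sub _ (by omega)]
  have g1 := geom_sum_mul rp (q+1)
  have g2 := geom_sum_mul rp j
  rw [hsum] at hroot
  have hQrp : rp ^ (q+1) - (1+δ) * rp ^ j + δ = 0 := by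
    linear_combination (rp - 1) * hroot - g1 + (1+δ) * g2
  -- Step 2: find s > rp with R(s) = 0 where R t = t^(q+1) - (1+δ)t^j - δ.
  set T : ℝ := rp + 2 + 2*δ with hTdef
  have hT1 : (1:ℝ) ≤ T := by nlinarith
  have hTj1 : (1:ℝ) ≤ T ^ j := one_le_pow₀ hT1
  have hpowT : T ^ (q+1) = T ^ j * T ^ (q+1-j) := by rw [← pow_add]; congr 1; omega
  have h2 : T ≤ T ^ (q+1-j) := by
    calc T = T^1 := (pow_one T).symm
    _ ≤ T^(q+1-j) := pow_le_pow_right₀ hT1 (by omega)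
  have hRT : 0 < T^(q+1) - (1+δ)*T^j - δ := by
    nlinarith [mul_le_mul_of_nonneg_left h2 (le_trans zero_le_one hTj1)]
  have hrpT : rp ≤ T := by nlinarith
  have hcont : ContinuousOn (fun t : ℝ => t^(q+1) - (1+δ)*t^j - δ) (Set.Icc rp T) := by
    fun_prop
  have hIVT := intermediate_value_Icc hrpT hcont
  have h0mem : (0:ℝ) ∈ Set.Icc ((fun t : ℝ => t^(q+1) - (1+δ)*t^j - δ) rp)
      ((fun t : ℝ => t^(q+1) - (1+δ)*t^j - δ) T) := by
    constructor
    · simp only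
      nlinarith
    · simp only
      linarith
  obtain ⟨s, hsmem, hs0⟩ := hIVT h0mem
  simp only at hs0
  have hsrp : rp < s := by
    rcases lt_or_eq_of_le hsmem.1 with h | h
    · exact h
    · exfalso
      rw [← h] at hs0
      nlinarith
  have hspos : 0 < s := lt_trans hrp hsrp
  refine ⟨-s, by linarith, ?_, ?_⟩
  · -- Q(-s) = 0
    rw [(hqeven.add_one).neg_pow, hjodd.neg_pow]
    linear_combination -hs0
  · intro z hz
    set a : ℝ := ‖z‖ with hadef
    have ha0 : 0 ≤ a := norm_nonneg z
    have hz' : z^(q+1) = ((1:ℂ)+δ)*z^j - δ := by linear_combination hz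
    have habs : a^(q+1) ≤ (1+δ)*a^j + δ := by
      have h1 : a^(q+1) = ‖((1:ℂ)+δ)*z^j - δ‖ := by
        rw [hadef, ← norm_pow, hz']
      have h2 : ‖((1:ℂ)+δ)*z^j - (δ:ℂ)‖ ≤
          ‖((1:ℂ)+δ)*z^j‖ + ‖(δ:ℂ)‖ := by
        exact norm_sub_le (((1:ℂ)+δ)*z^j) (δ:ℂ)
      have h3 : ‖((1:ℂ)+δ)*z^j‖ = (1+δ)*a^j := by
        rw [norm_mul, norm_pow]
        have : ((1:ℂ)+δ) = ((1+δ : ℝ) : ℂ) := by push_cast; ring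
        rw [this, Complex.norm_real, Real.norm_eq_abs, abs_of_pos (by linarith)]
      have h4 : ‖(δ:ℂ)‖ = δ := by
        rw [Complex.norm_real, Real.norm_eq_abs, abs_of_pos hδ]
      rw [h1]
      calc ‖((1:ℂ)+δ)*z^j - (δ:ℂ)‖ ≤ _ := h2
      _ = (1+δ)*a^j + δ := by rw [h3, h4]
    -- show a ≤ s
    rw [neg_neg]
    by_contra hcon
    push_neg at hcon
    have hj1 : s^j < a^j := pow_lt_pow_left₀ hcon hspos.le (by omega)
    have hq1 : s^(q+1-j) < a^(q+1-j) := pow_lt_pow_left₀ hcon hspos.le (by omega)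
    have hpa : a^(q+1) = a^j * a^(q+1-j) := by rw [← pow_add]; congr 1; omega
    have hps : s^(q+1) = s^j * s^(q+1-j) := by rw [← pow_add]; congr 1; omega
    have hsj_pos : 0 < s^j := pow_pos hspos j
    have haj_pos : 0 < a^j := lt_trans hsj_pos hj1
    nlinarith [mul_le_mul_of_nonneg_right habs hsj_pos.le,
      mul_pos (mul_pos haj_pos hsj_pos) (sub_pos.mpr hq1),
      mul_pos hδ (sub_pos.mpr hj1), hs0, hpa, hps]
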